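/- Assume the Hasse bound: |a_p| ≤ 2√p for every prime p not dividing Δ. Then for every ε > 0 there exists a constant C > 0 such that for all real x ≥ 2 and all real y with 1 ≤ y ≤ 2√x, one has D(x, y) ≤ C · x^ε · ∑_{1 ≤ m ≤ 4x/y², m squarefree} S_m(x). -/

import Mathlib

open scoped BigOperators

/-- Trace of Frobenius `a_p` of the reduction of `W` mod `p`, as in the paper:
`a_p = p + 1 - #W_p(𝔽_p)` for `p ∤ Δ`, and `a_p = 1` for `p ∣ Δ`. -/
noncomputable def trFrob (W : WeierstrassCurve ℤ) (p : ℕ) : ℤ :=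
  if (p : ℤ) ∣ W.Δ then 1
  else (p : ℤ) + 1 - Nat.card ((W.map (Int.castRingHom (ZMod p))).toAffine.Point)

/-- The prime counting function `π(x)`. -/
noncomputable def primePi (x : ℝ) : ℕ := {p : ℕ | p.Prime ∧ (p : ℝ) ≤ x}.ncard

/-- The largest `s` with `s ^ 2 ∣ n` (for `n > 0` this gives the unique decomposition
`n = s ^ 2 * r` with `r` squarefree). -/
noncomputable def sqPart (n : ℕ) : ℕ := sSup {s : ℕ | s ^ 2 ∣ n}

/-- `s_p`, where `4p - a_p ^ 2 = s_p ^ 2 * r_p` with `r_p` squarefree. -/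
noncomputable def sP (W : WeierstrassCurve ℤ) (p : ℕ) : ℕ :=
  sqPart (4 * p - trFrob W p ^ 2).toNat

/-- `r_p`, the squarefree part of `4p - a_p ^ 2`. -/
noncomputable def rP (W : WeierstrassCurve ℤ) (p : ℕ) : ℕ :=
  (4 * p - trFrob W p ^ 2).toNat / sP W p ^ 2

/-- `t_p`, the square root of the order of the Tate–Shafarevich group `Ш_p`:
`t_p = s_p` if `4p - a_p ^ 2` is odd and `t_p = s_p / 2` otherwise. -/
noncomputable def tP (W : WeierstrassCurve ℤ) (p : ℕ) : ℕ :=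
  if Odd (4 * p - trFrob W p ^ 2).toNat then sP W p else sP W p / 2

/-- `S_m(x)`: the number of primes `p ≤ x` such that `m * (4p - a_p ^ 2)` is a perfect square. -/
noncomputable def SCount (W : WeierstrassCurve ℤ) (m : ℕ) (x : ℝ) : ℕ :=
  {p : ℕ | p.Prime ∧ (p : ℝ) ≤ x ∧ IsSquare ((m : ℤ) * (4 * p - trFrob W p ^ 2))}.ncard

/-- `π_n(x)`: the number of primes `p ≤ x` with `p ∤ Δ` and `n ∣ t_p`
(equivalently, `n ^ 2 ∣ #Ш_p`). -/
noncomputable def piN (W : WeierstrassCurve ℤ) (n : ℕ) (x : ℝ) : ℕ :=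
  {p : ℕ | p.Prime ∧ (p : ℝ) ≤ x ∧ ¬ (p : ℤ) ∣ W.Δ ∧ n ∣ tP W p}.ncard

/-- `D(x, y) = ∑_{y ≤ n ≤ 2√x} π_n(x)`. -/
noncomputable def DCount (W : WeierstrassCurve ℤ) (x y : ℝ) : ℕ :=
  ∑ n ∈ Finset.Icc ⌈y⌉₊ ⌊2 * Real.sqrt x⌋₊, piN W n x

/-- `π_TS(x)`: the number of primes `p ≤ x` with `p ∤ Δ` and trivial `Ш_p`, i.e. `t_p = 1`. -/
noncomputable def piTS (W : WeierstrassCurve ℤ) (x : ℝ) : ℕ :=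
  {p : ℕ | p.Prime ∧ (p : ℝ) ≤ x ∧ ¬ (p : ℤ) ∣ W.Δ ∧ tP W p = 1}.ncard

/-- `Π_m(x)`: the number of primes `p ≤ x` with `p ∤ Δ` whose Frobenius field is `ℚ(√-m)`,
i.e. with `r_p = m`. -/
noncomputable def PiFrob (W : WeierstrassCurve ℤ) (m : ℕ) (x : ℝ) : ℕ :=
  {p : ℕ | p.Prime ∧ (p : ℝ) ≤ x ∧ ¬ (p : ℤ) ∣ W.Δ ∧ rP W p = m}.ncard

/-- `σ(x; u, v) = ∑_{u - v ≤ m ≤ u, m squarefree} Π_m(x)`. -/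
noncomputable def sigmaCount (W : WeierstrassCurve ℤ) (x u v : ℝ) : ℕ :=
  ∑ m ∈ (Finset.Icc ⌈u - v⌉₊ ⌊u⌋₊).filter Squarefree, PiFrob W m x

/-- Hypothesis (H): the Cojocaru–David character-sum bound, i.e. there is a constant `A` such
that for all `x ≥ 2` and all distinct primes `ℓ₁, ℓ₂ > 3`,
`|∑_{p ≤ x} ((a_p² - 4p)/(ℓ₁ℓ₂)) - π(x)/((ℓ₁² - 1)(ℓ₂² - 1))| ≤ A (ℓ₁ℓ₂)³ x^(1/2) log(ℓ₁ℓ₂x)`. -/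
def HypH (W : WeierstrassCurve ℤ) : Prop :=
  ∃ A : ℝ, ∀ x : ℝ, 2 ≤ x → ∀ l₁ l₂ : ℕ, l₁.Prime → l₂.Prime → l₁ ≠ l₂ → 3 < l₁ → 3 < l₂ →
    |(∑ p ∈ (Finset.range (⌊x⌋₊ + 1)).filter Nat.Prime,
        (jacobiSym (trFrob W p ^ 2 - 4 * p) (l₁ * l₂) : ℝ)) -
      (primePi x : ℝ) / (((l₁ : ℝ) ^ 2 - 1) * ((l₂ : ℝ) ^ 2 - 1))| ≤
    A * ((l₁ : ℝ) * l₂) ^ 3 * x ^ ((1 : ℝ) / 2) * Real.log ((l₁ : ℝ) * l₂ * x)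

/-- The Hasse bound: `|a_p| ≤ 2√p` for all primes `p ∤ Δ`. -/
def HasseBound (W : WeierstrassCurve ℤ) : Prop :=
  ∀ p : ℕ, p.Prime → ¬ (p : ℤ) ∣ W.Δ → |(trFrob W p : ℝ)| ≤ 2 * Real.sqrt p


/-- Per-factor bound: for a prime p with exponent e ≥ 1,
 (e+1) ≤ c * p^(ε e) where c = M if p < 2^(1/ε) else 1. -/
lemma factor_bound {ε : ℝ} (hε : 0 < ε) {p e : ℕ} (hp : 2 ≤ p) (he : 1 ≤ e) :
    ((e : ℝ) + 1) ≤ (if (p : ℝ) < (2:ℝ) ^ (1/ε) then max 1 (8 / (ε * Real.log 2)^2) else 1)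
      * ((p : ℝ) ^ (e : ℕ) : ℝ) ^ ε := by
  have hp0 : (0:ℝ) < p := by positivity
  have hp2 : (2:ℝ) ≤ p := by exact_mod_cast hp
  have hL : 0 < Real.log 2 := Real.log_pos one_lt_two
  have hpow : ((p:ℝ) ^ (e:ℕ)) ^ ε = (p:ℝ) ^ (ε * e) := by
    rw [← Real.rpow_natCast (p:ℝ) e, ← Real.rpow_mul hp0.le, mul_comm]
  split_ifs with h
  · -- p small: use base 2 bound
    have h2 : (2:ℝ) ^ (ε * e) ≤ (p:ℝ) ^ (ε * e) :=
      Real.rpow_le_rpow (by norm_num) hp2 (by positivity)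
    have hexp : (2:ℝ) ^ (ε * e) = Real.exp (Real.log 2 * (ε * e)) := by
      rw [Real.rpow_def_of_pos (by norm_num)]
    set u : ℝ := Real.log 2 * (ε * e) with hu
    have hu0 : 0 ≤ u := by positivity
    have hq : u ^ 2 / 4 ≤ Real.exp u := by
      have h1 : u / 2 + 1 ≤ Real.exp (u / 2) := Real.add_one_le_exp _
      have h2 : Real.exp u = Real.exp (u/2) ^ 2 := by
        rw [← Real.exp_nat_mul]; ring_nf
      nlinarith [Real.exp_pos (u/2)]
    have hM : (8 / (ε * Real.log 2)^2) * (u^2/4) = 2 * (e:ℝ)^2 := by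
      field_simp [hu]; ring
    have he1 : (1:ℝ) ≤ e := by exact_mod_cast he
    have key : (e:ℝ) + 1 ≤ (8 / (ε * Real.log 2)^2) * ((p:ℝ) ^ (ε * e)) := by
      have : (8 / (ε * Real.log 2)^2) * (u^2/4) ≤ (8 / (ε * Real.log 2)^2) * ((p:ℝ) ^ (ε * e)) := by
        apply mul_le_mul_of_nonneg_left (le_trans hq (hexp ▸ h2))
        positivity
      nlinarith
    rw [hpow]
    calc ((e:ℝ)+1) ≤ (8 / (ε * Real.log 2)^2) * ((p:ℝ) ^ (ε * e)) := key
      _ ≤ max 1 (8 / (ε * Real.log 2)^2) * ((p:ℝ) ^ (ε * e)) := by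
          apply mul_le_mul_of_nonneg_right (le_max_right _ _) (by positivity)
  · -- p large: p ≥ 2^(1/ε), so p^(εe) ≥ 2^e ≥ e+1
    push_neg at h
    have h2 : ((2:ℝ) ^ (1/ε)) ^ (ε * e) ≤ (p:ℝ) ^ (ε * e) :=
      Real.rpow_le_rpow (by positivity) h (by positivity)
    have h3 : ((2:ℝ) ^ (1/ε)) ^ (ε * e) = (2:ℝ) ^ (e:ℝ) := by
      rw [← Real.rpow_mul (by norm_num)]
      congr 1
      field_simp
    have h4 : ((e:ℝ) + 1) ≤ (2:ℝ) ^ (e:ℝ) := by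
      rw [Real.rpow_natCast]
      have := Nat.lt_two_pow_self (n := e)
      have : (e:ℝ) + 1 ≤ ((2^e : ℕ) : ℝ) := by exact_mod_cast this
      simpa using this
    rw [hpow, one_mul]
    calc ((e:ℝ)+1) ≤ (2:ℝ)^(e:ℝ) := h4
      _ = ((2:ℝ) ^ (1/ε)) ^ (ε * e) := h3.symm
      _ ≤ _ := h2

lemma divisor_bound {ε : ℝ} (hε : 0 < ε) :
    ∃ C : ℝ, 1 ≤ C ∧ ∀ n : ℕ, n ≠ 0 → (n.divisors.card : ℝ) ≤ C * (n : ℝ) ^ ε := by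
  set M : ℝ := max 1 (8 / (ε * Real.log 2)^2) with hM
  have hM1 : 1 ≤ M := le_max_left _ _
  set K : ℕ := ⌈(2:ℝ) ^ (1/ε)⌉₊ with hK
  refine ⟨M ^ K, one_le_pow₀ hM1, fun n hn => ?_⟩
  have hcard : (n.divisors.card : ℝ) = ∏ p ∈ n.primeFactors, ((n.factorization p : ℝ) + 1) := by
    rw [Nat.card_divisors hn]
    push_cast
    rfl
  have hnε : (n:ℝ) ^ ε = ∏ p ∈ n.primeFactors, (((p:ℝ) ^ (n.factorization p : ℕ)) ^ ε) := by
    rw [Real.finset_prod_rpow _ _ (fun i _ => by positivity)]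
    congr 1
    have := Nat.factorization_prod_pow_eq_self hn
    conv_lhs => rw [← this]
    rw [Finsupp.prod, Nat.support_factorization]
    push_cast
    rfl
  set c : ℕ → ℝ := fun p => if (p : ℝ) < (2:ℝ) ^ (1/ε) then M else 1 with hc
  have step : (n.divisors.card : ℝ) ≤ ∏ p ∈ n.primeFactors,
      (c p * ((p:ℝ) ^ (n.factorization p : ℕ)) ^ ε) := by
    rw [hcard]
    apply Finset.prod_le_prod
    · intro p _; positivity
    · intro p hp
      exact factor_bound hε (Nat.Prime.two_le (Nat.prime_of_mem_primeFactors hp))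
        ((Nat.Prime.factorization_pos_of_dvd (Nat.prime_of_mem_primeFactors hp) hn
          (Nat.dvd_of_mem_primeFactors hp)))
  rw [Finset.prod_mul_distrib] at step
  have hcprod : ∏ p ∈ n.primeFactors, c p ≤ M ^ K := by
    have h1 : ∏ p ∈ n.primeFactors, c p = ∏ p ∈ n.primeFactors.filter (fun p : ℕ => (p:ℝ) < (2:ℝ)^(1/ε)), M := by
      rw [← Finset.prod_filter_mul_prod_filter_not n.primeFactors (fun p : ℕ => (p:ℝ) < (2:ℝ)^(1/ε))]
      have : ∏ p ∈ n.primeFactors.filter (fun p : ℕ => ¬ (p:ℝ) < (2:ℝ)^(1/ε)), c p = 1 := by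
        apply Finset.prod_eq_one; intro p hp
        simp only [hc]
        rw [if_neg (Finset.mem_filter.mp hp).2]
      rw [this, mul_one]
      apply Finset.prod_congr rfl
      intro p hp
      simp only [hc]
      rw [if_pos (Finset.mem_filter.mp hp).2]
    rw [h1, Finset.prod_const]
    apply pow_le_pow_right₀ hM1
    calc (n.primeFactors.filter (fun p : ℕ => (p:ℝ) < (2:ℝ)^(1/ε))).card
        ≤ (Finset.range K).card := by
          apply Finset.card_le_card
          intro p hp
          rw [Finset.mem_range]
          have := (Finset.mem_filter.mp hp).2
          have : (p:ℝ) < K := lt_of_lt_of_le this (Nat.le_ceil _)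
          exact_mod_cast this
      _ = K := Finset.card_range K
  calc (n.divisors.card : ℝ)
      ≤ (∏ p ∈ n.primeFactors, c p) * ∏ p ∈ n.primeFactors, ((p:ℝ) ^ (n.factorization p : ℕ)) ^ ε := step
    _ ≤ M ^ K * (n:ℝ) ^ ε := by
        rw [hnε]
        apply mul_le_mul_of_nonneg_right hcprod
        apply Finset.prod_nonneg; intro p _; positivity

section SqPartFacts

lemma bddAbove_sq_dvd {N : ℕ} (hN : N ≠ 0) : BddAbove {s : ℕ | s ^ 2 ∣ N} := by
  refine ⟨N, fun s hs => ?_⟩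
  exact le_trans (Nat.le_self_pow two_ne_zero s) (Nat.le_of_dvd (Nat.pos_of_ne_zero hN) hs)

lemma sqPart_sq_dvd {N : ℕ} (hN : N ≠ 0) : sqPart N ^ 2 ∣ N :=
  Nat.sSup_mem ⟨1, by simp⟩ (bddAbove_sq_dvd hN)

lemma le_sqPart {N s : ℕ} (hN : N ≠ 0) (h : s ^ 2 ∣ N) : s ≤ sqPart N :=
  le_csSup (bddAbove_sq_dvd hN) h

lemma one_le_sqPart {N : ℕ} (hN : N ≠ 0) : 1 ≤ sqPart N :=
  le_sqPart hN (by simp)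

lemma squarefree_div_sqPart {N : ℕ} (hN : N ≠ 0) : Squarefree (N / sqPart N ^ 2) := by
  intro x hx
  set s := sqPart N with hs
  have hs2 : s ^ 2 ∣ N := sqPart_sq_dvd hN
  have hr : N = s ^ 2 * (N / s ^ 2) := (Nat.mul_div_cancel' hs2).symm
  have hrne : N / s ^ 2 ≠ 0 := by
    intro h0
    rw [h0, mul_zero] at hr
    exact hN hr
  have hx0 : x ≠ 0 := by
    rintro rfl
    simp only [zero_mul, zero_dvd_iff] at hx
    exact hrne hx
  have hdvd : (s * x) ^ 2 ∣ N := by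
    have hx2 : x ^ 2 ∣ N / s ^ 2 := by rwa [pow_two]
    calc (s * x) ^ 2 = s ^ 2 * x ^ 2 := by ring
      _ ∣ s ^ 2 * (N / s ^ 2) := mul_dvd_mul_left _ hx2
      _ = N := hr.symm
  have hle : s * x ≤ s := le_sqPart hN hdvd
  have hs1 : 1 ≤ s := one_le_sqPart hN
  have : x = 1 := by nlinarith [Nat.one_le_iff_ne_zero.mpr hx0]
  rw [this]; exact isUnit_one

end SqPartFacts

section KeyFacts

variable {W : WeierstrassCurve ℤ}

lemma trFrob_sq_lt (hHasse : HasseBound W) {p : ℕ} (hp : p.Prime)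
    (hd : ¬ (p : ℤ) ∣ W.Δ) : trFrob W p ^ 2 < 4 * (p : ℤ) := by
  have ha := hHasse p hp hd
  have h4p : trFrob W p ^ 2 ≤ 4 * (p : ℤ) := by
    have h1 : (|(trFrob W p : ℝ)|) ^ 2 ≤ (2 * Real.sqrt p) ^ 2 :=
      pow_le_pow_left₀ (abs_nonneg _) ha 2
    rw [sq_abs, mul_pow, Real.sq_sqrt (Nat.cast_nonneg p)] at h1
    have h2 : ((trFrob W p ^ 2 : ℤ) : ℝ) ≤ ((4 * (p : ℤ) : ℤ) : ℝ) := by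
      push_cast at h1 ⊢; linarith
    exact_mod_cast h2
  refine lt_of_le_of_ne h4p ?_
  intro hsq
  have h2 : (2 : ℤ) ∣ trFrob W p := by
    refine Int.prime_two.dvd_of_dvd_pow (n := 2) ?_
    exact ⟨2 * p, by rw [hsq]; ring⟩
  obtain ⟨b, hb⟩ := h2
  have hpb : (p : ℤ) = b ^ 2 := by
    have h4 : 4 * (p : ℤ) = 4 * b ^ 2 := by rw [← hsq, hb]; ring
    linarith
  have hpb' : p = b.natAbs ^ 2 := by
    have := congrArg Int.natAbs hpb
    simpa [Int.natAbs_pow] using this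
  have hdvd : b.natAbs ∣ p := ⟨b.natAbs, by rw [hpb']; ring⟩
  rcases hp.eq_one_or_self_of_dvd _ hdvd with h | h
  · rw [h] at hpb'; simp at hpb'; exact hp.one_lt.ne' hpb'
  · rw [h] at hpb'
    nlinarith [hp.two_le]

lemma key_facts (hHasse : HasseBound W) {p : ℕ} (hp : p.Prime)
    (hd : ¬ (p : ℤ) ∣ W.Δ) :
    (4 * (p : ℤ) - trFrob W p ^ 2).toNat ≠ 0 ∧
    (4 * (p : ℤ) - trFrob W p ^ 2).toNat = sP W p ^ 2 * rP W p ∧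
    Squarefree (rP W p) ∧ 1 ≤ sP W p ∧ tP W p ∣ sP W p ∧ 1 ≤ tP W p ∧
    (4 * (p : ℤ) - trFrob W p ^ 2).toNat ≤ 4 * p ∧
    IsSquare ((rP W p : ℤ) * (4 * (p : ℤ) - trFrob W p ^ 2)) := by
  have hZ : 0 < 4 * (p : ℤ) - trFrob W p ^ 2 := by
    have := trFrob_sq_lt hHasse hp hd
    linarith
  set Z : ℤ := 4 * (p : ℤ) - trFrob W p ^ 2 with hZdef
  set N : ℕ := Z.toNat with hNdef
  have hNZ : (N : ℤ) = Z := Int.toNat_of_nonneg hZ.le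
  have hN0 : N ≠ 0 := by
    intro h0
    rw [h0] at hNZ
    simp at hNZ
    omega
  have hsP : sP W p = sqPart N := rfl
  have hrP : rP W p = N / sP W p ^ 2 := rfl
  have hs2 : sP W p ^ 2 ∣ N := by rw [hsP]; exact sqPart_sq_dvd hN0
  have hNsr : N = sP W p ^ 2 * rP W p := by
    rw [hrP, Nat.mul_div_cancel' hs2]
  have hsr : Squarefree (rP W p) := by
    rw [hrP, hsP]; exact squarefree_div_sqPart hN0
  have hs1 : 1 ≤ sP W p := by rw [hsP]; exact one_le_sqPart hN0
  have htdvd : tP W p ∣ sP W p ∧ 1 ≤ tP W p := by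
    by_cases hodd : Odd N
    · have ht : tP W p = sP W p := if_pos hodd
      rw [ht]; exact ⟨dvd_rfl, hs1⟩
    · have ht : tP W p = sP W p / 2 := if_neg hodd
      have haev : Even (trFrob W p) := by
        by_contra hodd'
        have ha : Odd (trFrob W p) := Int.not_even_iff_odd.mp hodd'
        have h1 : Odd (trFrob W p ^ 2) := ha.pow
        have h2 : Odd Z := by
          rw [hZdef]
          exact (Even.sub_odd (by exact ⟨2 * p, by ring⟩) h1)
        rw [← hNZ] at h2
        exact hodd (by exact_mod_cast h2)
      obtain ⟨b, hb⟩ := haev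
      have h4 : (4 : ℤ) ∣ (N : ℤ) := ⟨(p : ℤ) - b ^ 2, by rw [hNZ, hZdef, hb]; ring⟩
      have h4N : 4 ∣ N := by exact_mod_cast h4
      have hsev : 2 ∣ sP W p := by
        by_contra hs2'
        have hsodd : Odd (sP W p) := Nat.odd_iff.mpr (by omega)
        have hcop : Nat.Coprime 4 (sP W p ^ 2) := by
          have h1 : Nat.Coprime 2 (sP W p) :=
            Nat.coprime_two_left.mpr hsodd
          have := h1.pow (n := 2) (m := 2)
          simpa using this
        have h4r : 4 ∣ rP W p :=
          hcop.dvd_of_dvd_mul_left (by rw [hNsr] at h4N; exact h4N)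
        have : IsUnit 2 := hsr 2 (by omega)
        simp [Nat.isUnit_iff] at this
      obtain ⟨t', hts⟩ := hsev
      rw [ht, hts]
      constructor
      · exact ⟨2, by omega⟩
      · omega
  have hN4p : N ≤ 4 * p := by
    have h1 : (N : ℤ) ≤ 4 * (p : ℤ) := by
      rw [hNZ, hZdef]
      nlinarith [sq_nonneg (trFrob W p)]
    exact_mod_cast h1
  refine ⟨hN0, hNsr, hsr, hs1, htdvd.1, htdvd.2, hN4p, ?_⟩
  refine ⟨((sP W p * rP W p : ℕ) : ℤ), ?_⟩
  have hNint : (N : ℤ) = (sP W p : ℤ) ^ 2 * (rP W p : ℤ) := by exact_mod_cast hNsr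
  rw [← hNZ, hNint]
  push_cast
  ring

end KeyFacts

/-- Assuming the Hasse bound, for every `ε > 0` there is `C > 0` such that for all `x ≥ 2` and
`1 ≤ y ≤ 2√x`, `D(x, y) ≤ C x^ε ∑_{1 ≤ m ≤ 4x/y², m squarefree} S_m(x)`. -/
theorem DCount_le_sum_SCount (W : WeierstrassCurve ℤ) (hΔ : W.Δ ≠ 0) (hHasse : HasseBound W) :
    ∀ ε : ℝ, 0 < ε → ∃ C : ℝ, 0 < C ∧ ∀ x y : ℝ, 2 ≤ x → 1 ≤ y → y ≤ 2 * Real.sqrt x →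
      ((DCount W x y : ℕ) : ℝ) ≤
        C * x ^ ε *
          ((∑ m ∈ (Finset.Icc 1 ⌊4 * x / y ^ 2⌋₊).filter Squarefree, SCount W m x : ℕ) : ℝ) := by
  intro ε hε
  obtain ⟨C₀, hC₀1, hC₀⟩ := divisor_bound hε
  have hC₀0 : (0:ℝ) < C₀ := lt_of_lt_of_le one_pos hC₀1
  refine ⟨C₀ * 2 ^ ε, by positivity, ?_⟩
  intro x y hx hy hyx
  classical
  have hx0 : (0:ℝ) < x := by linarith
  have hx1 : (1:ℝ) ≤ x := by linarith
  set X : ℕ := ⌊x⌋₊ with hX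
  set P : Finset ℕ := (Finset.range (X+1)).filter Nat.Prime with hPdef
  have hmemP : ∀ q : ℕ, q ∈ P ↔ q.Prime ∧ (q:ℝ) ≤ x := by
    intro q
    simp only [hPdef, Finset.mem_filter, Finset.mem_range, Nat.lt_succ_iff, hX]
    rw [Nat.le_floor_iff hx0.le]
    tauto
  set I : Finset ℕ := Finset.Icc ⌈y⌉₊ ⌊2 * Real.sqrt x⌋₊ with hIdef
  set Q : ℕ → ℕ → Prop := fun n q => ¬ (q:ℤ) ∣ W.Δ ∧ n ∣ tP W q with hQdef
  set B : ℝ := C₀ * 2 ^ ε * x ^ ε with hB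
  set M : Finset ℕ := (Finset.Icc 1 ⌊4 * x / y ^ 2⌋₊).filter Squarefree with hM
  -- Step 1: express DCount via Finset cards
  have hD : (DCount W x y : ℝ) = ∑ n ∈ I, ((P.filter (fun q => Q n q)).card : ℝ) := by
    rw [DCount]
    push_cast
    refine Finset.sum_congr rfl fun n _ => ?_
    congr 1
    rw [piN, ← Set.ncard_coe_finset]
    congr 1
    ext q
    simp only [Finset.coe_filter, Set.mem_setOf_eq, hmemP q, hQdef]
    tauto
  -- Step 2: swap double counting
  have hswap : ∑ n ∈ I, (P.filter (fun q => Q n q)).card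
      = ∑ q ∈ P, (I.filter (fun n => Q n q)).card := by
    simp only [Finset.card_filter]
    exact Finset.sum_comm
  -- Step 3: restrict to primes with at least one n
  set P' : Finset ℕ := P.filter (fun q => ∃ n ∈ I, Q n q) with hP'
  have hrestrict : ∑ q ∈ P, (I.filter (fun n => Q n q)).card
      = ∑ q ∈ P', (I.filter (fun n => Q n q)).card := by
    rw [hP']
    refine (Finset.sum_filter_of_ne ?_).symm
    intro q _ hne
    obtain ⟨n, hn⟩ := Finset.card_pos.mp (Nat.pos_of_ne_zero hne)
    rw [Finset.mem_filter] at hn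
    exact ⟨n, hn.1, hn.2⟩
  -- Step 4: per-prime bound
  have hper : ∀ q ∈ P', ((I.filter (fun n => Q n q)).card : ℝ) ≤ B := by
    intro q hq
    rw [hP', Finset.mem_filter] at hq
    obtain ⟨hqP, n₀, hn₀I, hd, hn₀t⟩ := hq
    obtain ⟨hqprime, hqx⟩ := (hmemP q).mp hqP
    obtain ⟨hN0, hNsr, hsr, hs1, htds, ht1, hN4p, hsq⟩ := key_facts hHasse hqprime hd
    have ht0 : tP W q ≠ 0 := by omega
    have hsub : I.filter (fun n => Q n q) ⊆ (tP W q).divisors := by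
      intro n hn
      rw [Finset.mem_filter] at hn
      exact Nat.mem_divisors.mpr ⟨hn.2.2, ht0⟩
    have hcard1 : ((I.filter (fun n => Q n q)).card : ℝ) ≤ ((tP W q).divisors.card : ℝ) := by
      exact_mod_cast Finset.card_le_card hsub
    have hdb := hC₀ (tP W q) ht0
    have hs4x : ((sP W q : ℝ)) ^ 2 ≤ 4 * x := by
      have hsd : sP W q ^ 2 ∣ (4 * (q:ℤ) - trFrob W q ^ 2).toNat := ⟨rP W q, hNsr⟩
      have h1 : sP W q ^ 2 ≤ 4 * q :=
        le_trans (Nat.le_of_dvd (Nat.pos_of_ne_zero hN0) hsd) hN4p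
      have h2 : ((sP W q : ℝ)) ^ 2 ≤ 4 * (q : ℝ) := by exact_mod_cast h1
      linarith
    have htx : (tP W q : ℝ) ≤ 2 * Real.sqrt x := by
      have hts : (tP W q : ℝ) ≤ (sP W q : ℝ) := by
        exact_mod_cast Nat.le_of_dvd (by omega) htds
      nlinarith [Real.sq_sqrt hx0.le, Real.sqrt_nonneg x, (by positivity : (0:ℝ) ≤ (tP W q : ℝ))]
    have hrp : ((tP W q : ℝ)) ^ ε ≤ (2 * Real.sqrt x) ^ ε :=
      Real.rpow_le_rpow (by positivity) htx hε.le
    have h2x : (2 * Real.sqrt x) ^ ε = 2 ^ ε * (Real.sqrt x) ^ ε :=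
      Real.mul_rpow (by norm_num) (Real.sqrt_nonneg x)
    have hsx : (Real.sqrt x) ^ ε ≤ x ^ ε := by
      rw [Real.sqrt_eq_rpow, ← Real.rpow_mul hx0.le]
      exact Real.rpow_le_rpow_of_exponent_le hx1 (by linarith)
    have h2ε0 : (0:ℝ) < 2 ^ ε := Real.rpow_pos_of_pos (by norm_num) ε
    calc ((I.filter (fun n => Q n q)).card : ℝ)
        ≤ ((tP W q).divisors.card : ℝ) := hcard1
      _ ≤ C₀ * (tP W q : ℝ) ^ ε := hdb
      _ ≤ C₀ * (2 ^ ε * (Real.sqrt x) ^ ε) := by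
          rw [← h2x]
          exact mul_le_mul_of_nonneg_left hrp hC₀0.le
      _ ≤ C₀ * (2 ^ ε * x ^ ε) := by
          apply mul_le_mul_of_nonneg_left _ hC₀0.le
          exact mul_le_mul_of_nonneg_left hsx h2ε0.le
      _ = B := by rw [hB]; ring
  -- Step 5: each prime in P' lands in a squarefree class
  have hfib : ∀ q ∈ P', rP W q ∈ M := by
    intro q hq
    rw [hP', Finset.mem_filter] at hq
    obtain ⟨hqP, n₀, hn₀I, hd, hn₀t⟩ := hq
    obtain ⟨hqprime, hqx⟩ := (hmemP q).mp hqP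
    obtain ⟨hN0, hNsr, hsr, hs1, htds, ht1, hN4p, hsq⟩ := key_facts hHasse hqprime hd
    rw [hM, Finset.mem_filter, Finset.mem_Icc]
    have hr0 : rP W q ≠ 0 := by
      intro h0; rw [h0, mul_zero] at hNsr; exact hN0 hNsr
    refine ⟨⟨by omega, ?_⟩, hsr⟩
    rw [Nat.le_floor_iff (by positivity)]
    rw [hIdef, Finset.mem_Icc] at hn₀I
    have hn₀y : y ≤ (n₀ : ℝ) := le_trans (Nat.le_ceil y) (by exact_mod_cast hn₀I.1)
    have hn₀s : n₀ ≤ sP W q := Nat.le_of_dvd (by omega) (hn₀t.trans htds)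
    have hkey : n₀ ^ 2 * rP W q ≤ 4 * q := by
      calc n₀ ^ 2 * rP W q ≤ sP W q ^ 2 * rP W q :=
            Nat.mul_le_mul_right _ (Nat.pow_le_pow_left hn₀s 2)
        _ ≤ 4 * q := hNsr ▸ hN4p
    have hkeyR : ((n₀:ℝ)) ^ 2 * (rP W q : ℝ) ≤ 4 * x := by
      have h1 : ((n₀:ℝ)) ^ 2 * (rP W q : ℝ) ≤ 4 * (q:ℝ) := by exact_mod_cast hkey
      linarith
    rw [le_div_iff₀ (by positivity)]
    have hy2 : y ^ 2 ≤ (n₀:ℝ) ^ 2 := by nlinarith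
    nlinarith [(by positivity : (0:ℝ) ≤ (rP W q : ℝ))]
  -- Step 6: card of P' bounded by sum of SCounts
  have hcardP' : (P'.card : ℝ) ≤ ∑ m ∈ M, (SCount W m x : ℝ) := by
    have h1 : P'.card = ∑ m ∈ M, (P'.filter (fun q => rP W q = m)).card :=
      Finset.card_eq_sum_card_fiberwise hfib
    rw [h1]
    push_cast
    refine Finset.sum_le_sum fun m hm => ?_
    have hsubset : ↑(P'.filter (fun q => rP W q = m)) ⊆
        {p : ℕ | p.Prime ∧ (p:ℝ) ≤ x ∧ IsSquare ((m : ℤ) * (4 * p - trFrob W p ^ 2))} := by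
      intro q hq
      simp only [Finset.coe_filter, Set.mem_setOf_eq] at hq
      obtain ⟨hq', hm'⟩ := hq
      rw [hP', Finset.mem_filter] at hq'
      obtain ⟨hqP, n₀, hn₀I, hd, hn₀t⟩ := hq'
      obtain ⟨hqprime, hqx⟩ := (hmemP q).mp hqP
      obtain ⟨hN0, hNsr, hsr, hs1, htds, ht1, hN4p, hsq⟩ := key_facts hHasse hqprime hd
      rw [← hm']
      exact ⟨hqprime, hqx, hsq⟩
    have hfin : {p : ℕ | p.Prime ∧ (p:ℝ) ≤ x ∧
        IsSquare ((m : ℤ) * (4 * p - trFrob W p ^ 2))}.Finite := by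
      apply Set.Finite.subset (Set.finite_Iic X)
      intro q hq
      exact Nat.le_floor hq.2.1
    calc ((P'.filter (fun q => rP W q = m)).card : ℝ)
        = ((↑(P'.filter (fun q => rP W q = m)) : Set ℕ).ncard : ℝ) := by
          rw [Set.ncard_coe_finset]
      _ ≤ (SCount W m x : ℝ) := by
          rw [SCount]
          exact_mod_cast Set.ncard_le_ncard hsubset hfin
  -- Combine
  have hfinal : (DCount W x y : ℝ) ≤ (P'.card : ℝ) * B := by
    rw [hD]
    have hcast : ∑ n ∈ I, ((P.filter (fun q => Q n q)).card : ℝ)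
        = ∑ q ∈ P', ((I.filter (fun n => Q n q)).card : ℝ) := by
      exact_mod_cast congrArg (Nat.cast : ℕ → ℝ) (hswap.trans hrestrict)
    rw [hcast]
    calc ∑ q ∈ P', ((I.filter (fun n => Q n q)).card : ℝ)
        ≤ ∑ _q ∈ P', B := Finset.sum_le_sum hper
      _ = (P'.card : ℝ) * B := by rw [Finset.sum_const, nsmul_eq_mul]
  have hB0 : (0:ℝ) ≤ B := by positivity
  have hScast : ((∑ m ∈ M, SCount W m x : ℕ) : ℝ) = ∑ m ∈ M, (SCount W m x : ℝ) := by
    push_cast; rfl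
  calc (DCount W x y : ℝ)
      ≤ (P'.card : ℝ) * B := hfinal
    _ ≤ (∑ m ∈ M, (SCount W m x : ℝ)) * B := mul_le_mul_of_nonneg_right hcardP' hB0
    _ = C₀ * 2 ^ ε * x ^ ε * ((∑ m ∈ M, SCount W m x : ℕ) : ℝ) := by
        rw [hScast, hB]; ring
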